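/- arXiv:0803.4388 — 9 statements merged into one kernel-verified Lean document; each statement's English description precedes it below -/
import Mathlib

section
/- For all n ≥ 1 and r ≥ 0, H_n^(r) = C(n+r-1, r-1) · (H_{n+r-1} - H_{r-1}) when r ≥ 1, where H_m denotes the m-th harmonic number. -/
noncomputable def hyperharmonic : ℕ → ℕ → ℝ
  | 0, n => if n = 0 then 0 else 1 / n
  | r + 1, n => ∑ k ∈ Finset.Icc 1 n, hyperharmonic r k

noncomputable def harmonicNum (m : ℕ) : ℝ := ∑ k ∈ Finset.Icc 1 m, (1 : ℝ) / k

lemma harmonicNum_zero : harmonicNum 0 = 0 := by simp [harmonicNum]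

lemma harmonicNum_succ (m : ℕ) :
    harmonicNum (m + 1) = harmonicNum m + 1 / (m + 1) := by
  unfold harmonicNum
  rw [Finset.sum_Icc_succ_top (by omega)]
  push_cast
  ring

lemma hyper_succ (r n : ℕ) :
    hyperharmonic (r + 1) (n + 1) = hyperharmonic (r + 1) n + hyperharmonic r (n + 1) := by
  show (∑ k ∈ Finset.Icc 1 (n+1), hyperharmonic r k) = _
  rw [Finset.sum_Icc_succ_top (by omega)]
  rfl

lemma hyper_aux (s : ℕ) : ∀ m : ℕ, hyperharmonic (s + 1) (m + 1) =
    (Nat.choose (m + s + 1) s : ℝ) * (harmonicNum (m + s + 1) - harmonicNum s) := by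
  induction s with
  | zero =>
    intro m
    induction m with
    | zero =>
      simp [hyperharmonic, harmonicNum]
    | succ m ih =>
      rw [hyper_succ, ih]
      have h2 : hyperharmonic 0 (m + 2) = 1 / ((m : ℝ) + 2) := by
        show (if m + 2 = 0 then (0:ℝ) else 1 / ((m + 2 : ℕ) : ℝ)) = _
        norm_num
      rw [h2]
      simp only [Nat.add_zero, Nat.choose_zero_right, harmonicNum_zero]
      rw [show m + 1 + 0 + 1 = (m + 0 + 1) + 1 by ring, harmonicNum_succ (m + 0 + 1)]
      push_cast
      ring
  | succ s ihs =>
    intro m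
    induction m with
    | zero =>
      rw [hyper_succ]
      have h0 : hyperharmonic (s + 1 + 1) 0 = 0 := by
        show (∑ k ∈ Finset.Icc 1 0, hyperharmonic (s+1) k) = 0
        simp
      rw [h0, zero_add, ihs 0]
      rw [show 0 + s + 1 = s + 1 by ring, show 0 + (s+1) + 1 = (s + 1) + 1 by ring]
      rw [Nat.choose_succ_self_right, Nat.choose_succ_self_right]
      rw [harmonicNum_succ (s+1), harmonicNum_succ s]
      have h1 : (s : ℝ) + 1 ≠ 0 := by positivity
      have h2 : (s : ℝ) + 1 + 1 ≠ 0 := by positivity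
      push_cast
      field_simp
      ring
    | succ m ihm =>
      rw [hyper_succ, ihm, ihs (m + 1)]
      rw [show m + (s+1) + 1 = m + s + 2 by ring,
          show m + 1 + s + 1 = m + s + 2 by ring,
          show m + 1 + (s + 1) + 1 = (m + s + 2) + 1 by ring,
          harmonicNum_succ (m+s+2), harmonicNum_succ s]
      have pascal : (Nat.choose (m + s + 2 + 1) (s+1) : ℝ) =
          (Nat.choose (m + s + 2) s : ℝ) + (Nat.choose (m + s + 2) (s+1) : ℝ) := by
        rw [Nat.choose_succ_succ]; push_cast; ring
      have key : ((s : ℝ) + 1) * (Nat.choose (m + s + 2 + 1) (s+1) : ℝ) =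
          ((m : ℝ) + s + 3) * (Nat.choose (m + s + 2) s : ℝ) := by
        have h2 := congrArg (fun x : ℕ => (x : ℝ)) (Nat.add_one_mul_choose_eq (m + s + 2) s)
        push_cast [Nat.succ_eq_add_one] at h2
        push_cast
        linarith
      rw [pascal] at key ⊢
      have h1 : (s : ℝ) + 1 ≠ 0 := by positivity
      have h3 : (m : ℝ) + s + 3 ≠ 0 := by positivity
      push_cast
      field_simp
      linear_combination (-1 : ℝ) * key

theorem hyperharmonic_closed_form (n r : ℕ) (hn : 1 ≤ n) (hr : 1 ≤ r) :
    hyperharmonic r n =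
      (Nat.choose (n + r - 1) (r - 1) : ℝ) * (harmonicNum (n + r - 1) - harmonicNum (r - 1)) := by
  obtain ⟨m, rfl⟩ : ∃ m, n = m + 1 := ⟨n - 1, by omega⟩
  obtain ⟨s, rfl⟩ : ∃ s, r = s + 1 := ⟨r - 1, by omega⟩
  rw [show m + 1 + (s + 1) - 1 = m + s + 1 by omega, show s + 1 - 1 = s by omega]
  exact hyper_aux s m
end

section
/- For all k ≥ 1 and r with 0 ≤ r < k, the generating function identity Σ_{n=0}^∞ F_{kn+r} t^n = (F_r + (-1)^r F_{k-r} t) / (1 - L_k t + (-1)^k t^2) holds as an identity of formal power series (equivalently, for |t| sufficiently small). -/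
open goldenRatio

def lucas : ℕ → ℕ
  | 0 => 2
  | 1 => 1
  | n + 2 => lucas (n + 1) + lucas n

lemma lucas_real : ∀ k : ℕ, (lucas k : ℝ) = φ ^ k + ψ ^ k := by
  intro k
  induction k using Nat.twoStepInduction with
  | zero => norm_num [lucas]
  | one => simpa [lucas] using gold_add_goldConj.symm
  | more n ih1 ih2 =>
    have : (lucas (n + 2) : ℝ) = (lucas (n + 1) : ℝ) + (lucas n : ℝ) := by
      rw [lucas]; push_cast; ring
    rw [this, ih1, ih2]
    have hs2 : (√5 : ℝ) ^ 2 = 5 := Real.sq_sqrt (by norm_num)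
    linear_combination φ ^ n * Real.goldenRatio_sq + ψ ^ n * Real.goldenConj_sq - (φ ^ n + ψ ^ n) / 2 * hs2

lemma aux_gf (a b c d s t : ℝ) (hs : s ≠ 0) (e1 : 1 - c * a * t ≠ 0)
    (e2 : 1 - d * b * t ≠ 0) :
    ((a - b) / s + a * b * ((c - d) / s) * t) / ((1 - c * a * t) * (1 - d * b * t)) =
      a / s * (1 - c * a * t)⁻¹ - b / s * (1 - d * b * t)⁻¹ := by
  have e1' : 1 - a * c * t ≠ 0 := by rwa [mul_comm a c]
  have e2' : 1 - b * d * t ≠ 0 := by rwa [mul_comm b d]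
  field_simp
  ring

theorem fib_general_generating_function (k r : ℕ) (hk : 1 ≤ k) (hr : r < k) :
    ∃ ε > 0, ∀ t : ℝ, |t| < ε →
      HasSum (fun n : ℕ => (Nat.fib (k * n + r) : ℝ) * t ^ n)
        (((Nat.fib r : ℝ) + (-1) ^ r * (Nat.fib (k - r) : ℝ) * t) /
          (1 - (lucas k : ℝ) * t + (-1) ^ k * t ^ 2)) := by
  have hφpos : (0:ℝ) < φ ^ k := pow_pos Real.goldenRatio_pos k
  refine ⟨(φ ^ k)⁻¹, by positivity, fun t ht => ?_⟩
  have ht1 : |t| < 1 := ht.trans_le (by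
    rw [inv_le_one_iff₀]; right; exact one_le_pow₀ Real.one_lt_goldenRatio.le)
  have hφt : |φ ^ k * t| < 1 := by
    rw [abs_mul, abs_of_pos hφpos]
    calc φ ^ k * |t| < φ ^ k * (φ ^ k)⁻¹ := by
          exact mul_lt_mul_of_pos_left ht hφpos
      _ = 1 := mul_inv_cancel₀ hφpos.ne'
  have hψabs : |ψ| < 1 := abs_lt.2 ⟨Real.neg_one_lt_goldenConj, Real.goldenConj_neg.trans one_pos⟩
  have hψt : |ψ ^ k * t| < 1 := by
    rw [abs_mul, abs_pow]
    calc |ψ| ^ k * |t| ≤ 1 * |t| := by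
          exact mul_le_mul_of_nonneg_right (pow_le_one₀ (abs_nonneg _) hψabs.le) (abs_nonneg _)
      _ < 1 := by simpa using ht1
  have h1 := (hasSum_geometric_of_abs_lt_one hφt).mul_left (φ ^ r / √5)
  have h2 := (hasSum_geometric_of_abs_lt_one hψt).mul_left (ψ ^ r / √5)
  have h := h1.sub h2
  have hfun : (fun n : ℕ => φ ^ r / √5 * (φ ^ k * t) ^ n - ψ ^ r / √5 * (ψ ^ k * t) ^ n)
      = fun n : ℕ => (Nat.fib (k * n + r) : ℝ) * t ^ n := by
    funext n
    rw [Real.coe_fib_eq, pow_add, pow_add, pow_mul, pow_mul, mul_pow, mul_pow]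
    ring
  rw [hfun] at h
  convert h using 1
  all_goals try rfl
  -- now prove the closed forms agree
  have hs : (√5 : ℝ) ≠ 0 := by positivity
  have hs2 : (√5 : ℝ) ^ 2 = 5 := Real.sq_sqrt (by norm_num)
  have e1 : (1:ℝ) - φ ^ k * t ≠ 0 := by
    have := (abs_lt.1 hφt).2; linarith [sub_pos.2 this]
  have e2 : (1:ℝ) - ψ ^ k * t ≠ 0 := by
    have := (abs_lt.1 hψt).2; linarith [sub_pos.2 this]
  have hab : (-1 : ℝ) ^ r = φ ^ r * ψ ^ r := by
    rw [← mul_pow, Real.goldenRatio_mul_goldenConj]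
  have hcd : (-1 : ℝ) ^ k = φ ^ k * ψ ^ k := by
    rw [← mul_pow, Real.goldenRatio_mul_goldenConj]
  have hk1 : (φ : ℝ) ^ k = φ ^ (k - r) * φ ^ r := by
    rw [← pow_add, Nat.sub_add_cancel hr.le]
  have hk2 : (ψ : ℝ) ^ k = ψ ^ (k - r) * ψ ^ r := by
    rw [← pow_add, Nat.sub_add_cancel hr.le]
  have hden : (1:ℝ) - (lucas k : ℝ) * t + (-1) ^ k * t ^ 2
      = (1 - φ ^ k * t) * (1 - ψ ^ k * t) := by
    rw [lucas_real, hcd]; ring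
  rw [Real.coe_fib_eq r, Real.coe_fib_eq (k - r), hden, hab, hk1, hk2]
  set a := (φ:ℝ) ^ r with ha
  set b := (ψ:ℝ) ^ r with hb
  set c := (φ:ℝ) ^ (k - r) with hc
  set d := (ψ:ℝ) ^ (k - r) with hd
  rw [hk1] at e1
  rw [hk2] at e2
  exact aux_gf a b c d (√5) t hs e1 e2
end

section
/- For k ≥ 1, Σ_{n=1}^∞ (A_{n,k} + B_{n,k}) t^n = t(F_{2k} + t F_{2k-1})/(1 - t - t^2), where A_{n,k} = Σ_{i=0}^{k-1} C(n+k-i-2, n-1) F_{2i+1} and B_{n,k} = Σ_{i=0}^{n-1} C(n+k-i-2, k-1) F_i. -/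
open Finset Nat

noncomputable def A (n k : ℕ) : ℝ :=
  ∑ i ∈ Finset.range k, (Nat.choose (n + k - i - 2) (n - 1) : ℝ) * Nat.fib (2 * i + 1)

noncomputable def B (n k : ℕ) : ℝ :=
  ∑ i ∈ Finset.range n, (Nat.choose (n + k - i - 2) (k - 1) : ℝ) * Nat.fib i

def natA (n k : ℕ) : ℕ :=
  ∑ i ∈ Finset.range k, (n + k - i - 2).choose (n - 1) * fib (2 * i + 1)

def natB (n k : ℕ) : ℕ :=
  ∑ i ∈ Finset.range n, (n + k - i - 2).choose (k - 1) * fib i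

lemma sum_odd_fib (k : ℕ) : ∑ i ∈ Finset.range k, fib (2 * i + 1) = fib (2 * k) := by
  induction k with
  | zero => simp
  | succ k ih =>
    rw [Finset.sum_range_succ, ih]
    have : 2 * (k + 1) = (2 * k) + 2 := by ring
    rw [this, fib_add_two]

lemma recA (n j : ℕ) : natA (n+2) (j+1) = natA (n+1) (j+1) + natA (n+2) j := by
  unfold natA
  have h : ∀ i ∈ Finset.range (j+1),
      (n + 2 + (j+1) - i - 2).choose (n + 2 - 1) * fib (2*i+1)
      = (n + 1 + (j+1) - i - 2).choose (n + 1 - 1) * fib (2*i+1)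
        + (n + 2 + j - i - 2).choose (n + 2 - 1) * fib (2*i+1) := by
    intro i hi
    simp only [Finset.mem_range] at hi
    have h1 : n + 2 + (j+1) - i - 2 = (n + j - i) + 1 := by omega
    have h2 : n + 1 + (j+1) - i - 2 = n + j - i := by omega
    have h3 : n + 2 + j - i - 2 = n + j - i := by omega
    have h4 : n + 2 - 1 = n + 1 := by omega
    have h5 : n + 1 - 1 = n := by omega
    rw [h1, h2, h3, h4, h5, Nat.choose_succ_succ, add_mul]
  rw [Finset.sum_congr rfl h, Finset.sum_add_distrib]
  congr 1
  rw [Finset.sum_range_succ]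
  have : (n + 2 + j - j - 2).choose (n + 2 - 1) = 0 := by
    apply Nat.choose_eq_zero_of_lt; omega
  rw [this]
  simp

lemma recB (n k : ℕ) : natB (n+2) (k+2) = natB (n+2) (k+1) + natB (n+1) (k+2) := by
  unfold natB
  have h : ∀ i ∈ Finset.range (n+2),
      (n + 2 + (k+2) - i - 2).choose (k + 2 - 1) * fib i
      = (n + 2 + (k+1) - i - 2).choose (k + 1 - 1) * fib i
        + (n + 1 + (k+2) - i - 2).choose (k + 2 - 1) * fib i := by
    intro i hi
    simp only [Finset.mem_range] at hi
    have h1 : n + 2 + (k+2) - i - 2 = (n + k + 1 - i) + 1 := by omega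
    have h2 : n + 2 + (k+1) - i - 2 = n + k + 1 - i := by omega
    have h3 : n + 1 + (k+2) - i - 2 = n + k + 1 - i := by omega
    have h4 : k + 2 - 1 = k + 1 := by omega
    have h5 : k + 1 - 1 = k := by omega
    rw [h1, h2, h3, h4, h5, Nat.choose_succ_succ, add_mul]
  rw [Finset.sum_congr rfl h, Finset.sum_add_distrib]
  congr 1
  rw [Finset.sum_range_succ]
  have : (n + 1 + (k+2) - (n+1) - 2).choose (k + 2 - 1) = 0 := by
    apply Nat.choose_eq_zero_of_lt; omega
  rw [this]
  simp

lemma key (k : ℕ) : ∀ n, natA (n+1) (k+1) + natB (n+1) (k+1) = fib (n + 2 * (k+1)) := by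
  induction k with
  | zero =>
    intro n
    have hA : natA (n+1) 1 = 1 := by
      unfold natA
      simp [Nat.choose_self, show n + 1 + 1 - 0 - 2 = n from by omega,
        show n + 1 - 1 = n from by omega]
    have hB : natB (n+1) 1 + 1 = fib (n+2) := by
      unfold natB
      have : ∀ i ∈ Finset.range (n+1),
          (n + 1 + 1 - i - 2).choose (1-1) * fib i = fib i := by
        intro i hi; simp
      rw [Finset.sum_congr rfl this]
      exact (fib_succ_eq_succ_sum (n+1)).symm
    have h1 : 1 ≤ fib (n+2) := by
      have := fib_pos.mpr (show 0 < n + 2 by omega); omega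
    rw [show (0:ℕ)+1 = 1 from rfl, show n + 2 * (0+1) = n + 2 from by ring, hA]
    omega
  | succ k ih =>
    intro n
    induction n with
    | zero =>
      have hA : natA 1 (k+2) = fib (2 * (k+2)) := by
        unfold natA
        rw [← sum_odd_fib (k+2)]
        apply Finset.sum_congr rfl
        intro i hi
        simp only [Finset.mem_range] at hi
        simp [show (1:ℕ) - 1 = 0 from rfl]
      have hB : natB 1 (k+2) = 0 := by
        unfold natB
        simp
      rw [hA, hB]
      rw [show 0 + 2*(k+1+1) = 2*(k+2) from by ring]
      omega
    | succ n ihn =>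
      have h1 := recA n (k+1)
      have h2 := recB n k
      have h3 := ih (n+1)
      have hfib : fib (n + 1 + 2 * (k + 2)) = fib (n + 2 * (k+2)) + fib (n + 1 + 2 * (k+1)) := by
        have e1 : n + 1 + 2 * (k+2) = (n + 2 * (k+1) + 1) + 2 := by ring
        have e2 : n + 2 * (k+2) = (n + 2 * (k+1) + 1) + 1 := by ring
        have e3 : n + 1 + 2 * (k+1) = n + 2 * (k+1) + 1 := by ring
        rw [e1, e2, e3, fib_add_two]
        omega
      rw [show n+1+1 = n+2 from by omega, show k+1+1 = k+2 from by omega] at *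
      omega

lemma A_eq (n k : ℕ) : A n k = natA n k := by
  unfold A natA; push_cast; rfl

lemma B_eq (n k : ℕ) : B n k = natB n k := by
  unfold B natB; push_cast; rfl


lemma sqrt5_sq : Real.sqrt 5 ^ 2 = 5 := Real.sq_sqrt (by norm_num)

lemma sqrt5_gt : (2:ℝ) < Real.sqrt 5 := by
  nlinarith [sqrt5_sq, Real.sqrt_nonneg 5]

lemma fibGF (t : ℝ) (ht : |t| < (Real.sqrt 5 - 1) / 2) :
    HasSum (fun n : ℕ => (Nat.fib n : ℝ) * t ^ n) (t / (1 - t - t ^ 2)) := by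
  set s := Real.sqrt 5 with hs
  have hs2 : s ^ 2 = 5 := sqrt5_sq
  have hs4 : (2:ℝ) < s := sqrt5_gt
  set a : ℝ := (1 + s) / 2 with ha
  set b : ℝ := (1 - s) / 2 with hb
  have hta : |t * a| < 1 := by
    rw [abs_mul, abs_of_pos (show (0:ℝ) < a by rw [ha]; nlinarith)]
    have := abs_nonneg t
    nlinarith [ht]
  have htb : |t * b| < 1 := by
    rw [abs_mul, abs_of_neg (show b < 0 by rw [hb]; nlinarith)]
    have := abs_nonneg t
    nlinarith [ht]
  have h1 := hasSum_geometric_of_abs_lt_one hta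
  have h2 := hasSum_geometric_of_abs_lt_one htb
  have h3 := (h1.sub h2).div_const s
  have hfun : (fun n : ℕ => ((t*a)^n - (t*b)^n) / s) = fun n : ℕ => (Nat.fib n : ℝ) * t ^ n := by
    funext n
    rw [Real.coe_fib_eq]
    have hg : Real.goldenRatio = a := rfl
    have hg' : Real.goldenConj = b := rfl
    rw [hg, hg', mul_pow, mul_pow]
    ring
  rw [hfun] at h3
  have ha0 : (0:ℝ) < 1 - t * a := by
    have := abs_lt.1 hta; linarith [this.2]
  have hb0 : (0:ℝ) < 1 - t * b := by
    have := abs_lt.1 htb; linarith [this.2]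
  have hD : 1 - t - t ^ 2 = (1 - t * a) * (1 - t * b) := by
    rw [ha, hb]; nlinarith [hs2]
  have hval : ((1 - t*a)⁻¹ - (1 - t*b)⁻¹) / s = t / (1 - t - t ^ 2) := by
    rw [hD]
    have hs0 : s ≠ 0 := by positivity
    field_simp
    simp only [ha, hb]
    ring
  rwa [hval] at h3

lemma keyR (n k : ℕ) : A (n+1) (k+1) + B (n+1) (k+1) = (fib (n + 2*(k+1)) : ℝ) := by
  rw [A_eq, B_eq]
  exact_mod_cast congrArg (Nat.cast : ℕ → ℝ) (key k n)

theorem row_generating_function (k : ℕ) (hk : 1 ≤ k) (t : ℝ)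
    (ht : |t| < (Real.sqrt 5 - 1) / 2) :
    HasSum (fun n : ℕ => (A (n + 1) k + B (n + 1) k) * t ^ (n + 1))
      (t * ((Nat.fib (2 * k) : ℝ) + t * Nat.fib (2 * k - 1)) / (1 - t - t ^ 2)) := by
  obtain ⟨k', rfl⟩ : ∃ k', k = k' + 1 := ⟨k - 1, by omega⟩
  have G := fibGF t ht
  have G1 : HasSum (fun n : ℕ => (fib (n+1) : ℝ) * t ^ (n+1)) (t / (1 - t - t^2)) := by
    apply (hasSum_nat_add_iff (f := fun n : ℕ => (fib n : ℝ) * t ^ n) 1).mpr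
    simpa using G
  have G2 : HasSum (fun n : ℕ => (fib n : ℝ) * t ^ n * t) (t / (1 - t - t^2) * t) :=
    G.mul_right t
  have S := (G1.mul_left ((fib (2*(k'+1)) : ℝ))).add (G2.mul_left ((fib (2*(k'+1)-1) : ℝ)))
  have hfun : (fun n : ℕ => (A (n+1) (k'+1) + B (n+1) (k'+1)) * t ^ (n+1))
      = fun n : ℕ => (fib (2*(k'+1)) : ℝ) * ((fib (n+1):ℝ) * t^(n+1))
        + (fib (2*(k'+1)-1):ℝ) * ((fib n:ℝ) * t^n * t) := by
    funext n
    rw [keyR]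
    have hsplit : fib (n + 2*(k'+1)) = fib (2*(k'+1)-1) * fib n + fib (2*(k'+1)) * fib (n+1) := by
      have h := Nat.fib_add (2*k'+1) n
      rw [show n + 2*(k'+1) = 2*k'+1 + n + 1 from by ring, h,
          show 2*(k'+1)-1 = 2*k'+1 from by omega, show 2*k'+1+1 = 2*(k'+1) from by ring]
    rw [hsplit]
    push_cast
    ring
  rw [hfun]
  convert S using 1
  · rfl
  ring
end

section
/- For n ≥ 1, Σ_{k=1}^∞ (A_{n,k} + B_{n,k}) t^k = t(F_{n+1} - t F_{n-1})/(t^2 - 3t + 1), where A_{n,k} = Σ_{i=0}^{k-1} C(n+k-i-2, n-1) F_{2i+1} and B_{n,k} = Σ_{i=0}^{n-1} C(n+k-i-2, k-1) F_i. -/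
open Finset goldenRatio Real

def aN (n k : ℕ) : ℕ := ∑ i ∈ range k, Nat.choose (n + k - i - 2) (n - 1) * Nat.fib (2 * i + 1)
def bN (n k : ℕ) : ℕ := ∑ i ∈ range n, Nat.choose (n + k - i - 2) (k - 1) * Nat.fib i

lemma aRec (n k : ℕ) : aN (n+2) (k+1) = aN (n+1) (k+1) + aN (n+2) k := by
  unfold aN
  simp only [show n+2-1 = n+1 from rfl, show n+1-1 = n from rfl]
  have h : ∀ i ∈ range (k+1),
      Nat.choose ((n+2) + (k+1) - i - 2) (n+1) * Nat.fib (2*i+1)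
      = Nat.choose ((n+1) + (k+1) - i - 2) n * Nat.fib (2*i+1)
        + Nat.choose ((n+2) + k - i - 2) (n+1) * Nat.fib (2*i+1) := by
    intro i hi
    have hik : i ≤ k := by simpa using Nat.lt_succ_iff.mp (mem_range.mp hi)
    have e1 : (n+2) + (k+1) - i - 2 = (n + k - i) + 1 := by omega
    have e2 : (n+1) + (k+1) - i - 2 = n + k - i := by omega
    have e3 : (n+2) + k - i - 2 = n + k - i := by omega
    rw [e1, e2, e3, Nat.choose_succ_succ, add_mul]
  rw [Finset.sum_congr rfl h, Finset.sum_add_distrib]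
  congr 1
  rw [Finset.sum_range_succ]
  have e : (n+2) + k - k - 2 = n := by omega
  rw [e, Nat.choose_succ_self, zero_mul, add_zero]

lemma bRec (n k : ℕ) : bN (n+2) (k+2) = bN (n+2) (k+1) + bN (n+1) (k+2) := by
  unfold bN
  simp only [show k+2-1 = k+1 from rfl, show k+1-1 = k from rfl]
  have h : ∀ i ∈ range (n+2),
      Nat.choose ((n+2) + (k+2) - i - 2) (k+1) * Nat.fib i
      = Nat.choose ((n+2) + (k+1) - i - 2) k * Nat.fib i
        + Nat.choose ((n+1) + (k+2) - i - 2) (k+1) * Nat.fib i := by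
    intro i hi
    have hik : i ≤ n + 1 := by simpa using Nat.lt_succ_iff.mp (mem_range.mp hi)
    have e1 : (n+2) + (k+2) - i - 2 = (n + k + 1 - i) + 1 := by omega
    have e2 : (n+2) + (k+1) - i - 2 = n + k + 1 - i := by omega
    have e3 : (n+1) + (k+2) - i - 2 = n + k + 1 - i := by omega
    rw [e1, e2, e3, Nat.choose_succ_succ, add_mul]
  rw [Finset.sum_congr rfl h, Finset.sum_add_distrib]
  congr 1
  rw [Finset.sum_range_succ]
  have e : (n+1) + (k+2) - (n+1) - 2 = k := by omega
  rw [e, Nat.choose_succ_self, zero_mul, add_zero]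

lemma oddSum (k : ℕ) : ∑ i ∈ range (k+1), Nat.fib (2*i+1) = Nat.fib (2*k+2) := by
  induction k with
  | zero => simp
  | succ k ih =>
    rw [Finset.sum_range_succ, ih]
    show Nat.fib (2*k+2) + Nat.fib ((2*k+2)+1) = Nat.fib ((2*k+2)+2)
    conv_rhs => rw [Nat.fib_add_two]

lemma base1 (k : ℕ) : aN 1 (k+1) + bN 1 (k+1) = Nat.fib (2*k+2) := by
  unfold aN bN
  simp only [Nat.fib_zero, mul_zero, Finset.sum_range_one, show (1:ℕ)-1 = 0 from rfl]
  have h : ∀ i ∈ range (k+1), Nat.choose (1 + (k+1) - i - 2) 0 * Nat.fib (2*i+1) = Nat.fib (2*i+1) := by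
    intro i hi; rw [Nat.choose_zero_right, one_mul]
  rw [Finset.sum_congr rfl h, oddSum, add_zero]

lemma baseK (n : ℕ) : aN (n+2) 1 + bN (n+2) 1 = Nat.fib (n+3) := by
  unfold aN bN
  simp only [show n+2-1 = n+1 from rfl, show (1:ℕ)-1 = 0 from rfl]
  have h : ∀ i ∈ range (n+2), Nat.choose ((n+2) + 1 - i - 2) 0 * Nat.fib i = Nat.fib i := by
    intro i hi; rw [Nat.choose_zero_right, one_mul]
  rw [Finset.sum_congr rfl h, Finset.sum_range_one]
  have e : (n+2) + 1 - 0 - 2 = n + 1 := by omega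
  rw [e, Nat.choose_self, one_mul]
  rw [show Nat.fib (n+3) = ∑ i ∈ range (n+2), Nat.fib i + 1 from Nat.fib_succ_eq_succ_sum (n+2)]
  show 1 + ∑ i ∈ range (n+2), Nat.fib i = ∑ i ∈ range (n+2), Nat.fib i + 1
  omega

lemma closedForm : ∀ n k, aN (n+1) (k+1) + bN (n+1) (k+1) = Nat.fib (n + 2*k + 2) := by
  intro n
  induction n with
  | zero => intro k; simpa using base1 k
  | succ n ihn =>
    intro k
    induction k with
    | zero => simpa using baseK n
    | succ k ihk =>
      have hA : aN (n+2) (k+2) = aN (n+1) (k+2) + aN (n+2) (k+1) := aRec n (k+1)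
      have hB : bN (n+2) (k+2) = bN (n+2) (k+1) + bN (n+1) (k+2) := bRec n k
      have h1 : aN (n+1) (k+2) + bN (n+1) (k+2) = Nat.fib (n + 2*k + 4) := by
        have := ihn (k+1)
        rwa [show n + 2*(k+1) + 2 = n + 2*k + 4 by ring] at this
      have h2 : aN (n+2) (k+1) + bN (n+2) (k+1) = Nat.fib (n + 2*k + 3) := by
        have := ihk
        rwa [show n + 1 + 2*k + 2 = n + 2*k + 3 by ring] at this
      have h3 : Nat.fib (n+2*k+4) + Nat.fib (n+2*k+3) = Nat.fib (n+2*k+5) := by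
        rw [show n+2*k+5 = (n+2*k+3)+2 from rfl]
        conv_rhs => rw [Nat.fib_add_two]
        exact Nat.add_comm _ _
      have hgoal : aN (n+1+1) (k+1+1) + bN (n+1+1) (k+1+1) = Nat.fib (n+2*k+5) := by
        rw [show (k+1+1) = k+2 from rfl, show (n+1+1) = n+2 from rfl, hA, hB]
        omega
      rwa [show n + 1 + 2*(k+1) + 2 = n+2*k+5 by ring]


lemma keyAlg (p q s t u v : ℝ) (hpq : p * q = -1) (hs : s ≠ 0)
    (hp : 1 - p ^ 2 * t ≠ 0) (hq : 1 - q ^ 2 * t ≠ 0)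
    (hprod : (1 - p ^ 2 * t) * (1 - q ^ 2 * t) = t ^ 2 - 3 * t + 1) :
    t * ((u * p ^ 2 - v * q ^ 2) / s - t * ((u - v) / s)) / (t ^ 2 - 3 * t + 1)
      = u * p ^ 2 * t / s * (1 - p ^ 2 * t)⁻¹ - v * q ^ 2 * t / s * (1 - q ^ 2 * t)⁻¹ := by
  rw [← hprod]
  field_simp
  have hp' : 1 - t * p ^ 2 ≠ 0 := by rwa [mul_comm]
  have hq' : 1 - t * q ^ 2 ≠ 0 := by rwa [mul_comm]
  field_simp
  linear_combination (t ^ 2 * (u - v) * (p * q - 1)) * hpq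

lemma A_cast (n k : ℕ) : A n k = (aN n k : ℝ) := by unfold A aN; push_cast; rfl
lemma B_cast (n k : ℕ) : B n k = (bN n k : ℝ) := by unfold B bN; push_cast; rfl

theorem column_generating_function (n : ℕ) (hn : 1 ≤ n) :
    ∃ ε > 0, ∀ t : ℝ, |t| < ε →
      HasSum (fun k : ℕ => (A n (k + 1) + B n (k + 1)) * t ^ (k + 1))
        (t * ((Nat.fib (n + 1) : ℝ) - t * Nat.fib (n - 1)) / (t ^ 2 - 3 * t + 1)) := by
  obtain ⟨m, rfl⟩ : ∃ m, n = m + 1 := ⟨n - 1, (Nat.succ_pred_eq_of_pos hn).symm⟩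
  refine ⟨1/8, by norm_num, fun t ht => ?_⟩
  have hpq : φ * ψ = -1 := goldenRatio_mul_goldenConj
  have hadd : φ + ψ = 1 := goldenRatio_add_goldenConj
  have hs : Real.sqrt 5 ≠ 0 := by positivity
  have hp2 : (0:ℝ) < φ^2 := by positivity
  have hp4 : φ^2 < 4 := by nlinarith [goldenRatio_lt_two, goldenRatio_pos]
  have hq2 : ψ^2 < 1 := by nlinarith [goldenConj_neg, neg_one_lt_goldenConj]
  have hq0 : (0:ℝ) ≤ ψ^2 := sq_nonneg _
  have habs : |φ^2 * t| < 1 := by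
    rw [abs_mul, abs_of_pos hp2]
    nlinarith [abs_nonneg t]
  have habs' : |ψ^2 * t| < 1 := by
    rw [abs_mul, abs_of_nonneg hq0]
    nlinarith [abs_nonneg t]
  have hp : 1 - φ^2 * t ≠ 0 := by
    refine sub_ne_zero.mpr fun h => ?_
    rw [← h] at habs; simp at habs
  have hq : 1 - ψ^2 * t ≠ 0 := by
    refine sub_ne_zero.mpr fun h => ?_
    rw [← h] at habs'; simp at habs'
  have hprod : (1 - φ^2 * t) * (1 - ψ^2 * t) = t^2 - 3*t + 1 := by
    have h1 : φ^2 = φ + 1 := goldenRatio_sq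
    have h2 : ψ^2 = ψ + 1 := goldenConj_sq
    rw [h1, h2]
    linear_combination (t^2 - t) * hadd + t^2 * hpq
  have hne : t^2 - 3*t + 1 ≠ 0 := hprod ▸ mul_ne_zero hp hq
  have H := ((hasSum_geometric_of_abs_lt_one habs).mul_left (φ^(m+2) * t / Real.sqrt 5)).sub
    ((hasSum_geometric_of_abs_lt_one habs').mul_left (ψ^(m+2) * t / Real.sqrt 5))
  convert H using 1
  · rfl
  · funext k
    rw [A_cast, B_cast]
    have hc : (aN (m+1) (k+1) : ℝ) + (bN (m+1) (k+1) : ℝ) = (Nat.fib (m + 2*k + 2) : ℝ) := by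
      rw [← Nat.cast_add, closedForm]
    rw [hc, Real.coe_fib_eq]
    have e1 : φ^(m + 2*k + 2) = φ^(m+2) * (φ^2)^k := by
      rw [← pow_mul, ← pow_add]; ring_nf
    have e2 : ψ^(m + 2*k + 2) = ψ^(m+2) * (ψ^2)^k := by
      rw [← pow_mul, ← pow_add]; ring_nf
    rw [e1, e2, mul_pow, mul_pow]
    field_simp
    ring
  · rw [show m+1+1 = m+2 from rfl, show m+1-1 = m from rfl, Real.coe_fib_eq, Real.coe_fib_eq,
      show (φ:ℝ)^(m+2) = φ^m * φ^2 by ring, show (ψ:ℝ)^(m+2) = ψ^m * ψ^2 by ring]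
    exact keyAlg φ ψ (Real.sqrt 5) t (φ^m) (ψ^m) hpq hs hp hq hprod
end

section
/- For n ≥ 0, k ≥ 0, and 0 ≤ s ≤ (r-n-1)/2, the incomplete Fibonacci numbers satisfy the inversion formula F_{r+n}(s+n) = Σ_{k=0}^{n} C(n,k) (-1)^{n-k} F_{r+2k}(s+k). -/
def incFib (n k : ℕ) : ℕ := ∑ j ∈ Finset.range (k + 1), Nat.choose (n - 1 - j) j

/-- Pascal-type recurrence for incomplete Fibonacci numbers, valid for `N ≥ 1`. -/
lemma incFib_rec (N k : ℕ) (hN : 1 ≤ N) :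
    incFib (N + 2) (k + 1) = incFib (N + 1) (k + 1) + incFib N k := by
  unfold incFib
  have key : ∀ j : ℕ, Nat.choose (N - j) (j + 1) =
      Nat.choose (N - 1 - j) (j + 1) + Nat.choose (N - 1 - j) j := by
    intro j
    rcases lt_or_ge j N with hj | hj
    · have : N - j = (N - 1 - j) + 1 := by omega
      rw [this, Nat.choose_succ_succ]
      ring
    · have h1 : N - j = 0 := by omega
      have h2 : N - 1 - j = 0 := by omega
      rw [h1, h2, Nat.choose_eq_zero_of_lt (show 0 < j by omega)]
      simp
  rw [Finset.sum_range_succ' (fun j => Nat.choose (N + 2 - 1 - j) j) (k + 1),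
    Finset.sum_range_succ' (fun j => Nat.choose (N + 1 - 1 - j) j) (k + 1)]
  simp only [Nat.choose_zero_right]
  have e1 : ∀ j, N + 2 - 1 - (j + 1) = N - j := by intro j; omega
  have e2 : ∀ j, N + 1 - 1 - (j + 1) = N - 1 - j := by intro j; omega
  calc (∑ j ∈ Finset.range (k + 1), Nat.choose (N + 2 - 1 - (j + 1)) (j + 1)) + 1
      = (∑ j ∈ Finset.range (k + 1),
          (Nat.choose (N - 1 - j) (j + 1) + Nat.choose (N - 1 - j) j)) + 1 := by
        congr 1
        refine Finset.sum_congr rfl fun j _ => ?_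
        rw [e1 j, key j]
    _ = ((∑ j ∈ Finset.range (k + 1), Nat.choose (N + 1 - 1 - (j + 1)) (j + 1)) + 1) +
          ∑ j ∈ Finset.range (k + 1), Nat.choose (N - 1 - j) j := by
        rw [Finset.sum_add_distrib]
        simp only [e2]
        ring

/-- Forward binomial transform: `incFib (r+k+m) (s+m) = ∑ C(k,j) · incFib (r+(m-j)) (s+(m-j))`. -/
lemma incFib_forward (r s : ℕ) (hr : 1 ≤ r) :
    ∀ k m : ℕ, k ≤ m →
      incFib (r + k + m) (s + m) =
        ∑ j ∈ Finset.range (k + 1),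
          Nat.choose k j * incFib (r + (m - j)) (s + (m - j)) := by
  intro k
  induction k with
  | zero => intro m _; simp
  | succ k ih =>
    intro m hm
    obtain ⟨m', rfl⟩ : ∃ m', m = m' + 1 := ⟨m - 1, by omega⟩
    set f : ℕ → ℕ := fun t => incFib (r + t) (s + t) with hf
    have hrec : incFib (r + (k + 1) + (m' + 1)) (s + (m' + 1)) =
        incFib (r + k + (m' + 1)) (s + (m' + 1)) + incFib (r + k + m') (s + m') := by
      have e1 : r + (k + 1) + (m' + 1) = (r + k + m') + 2 := by ring
      have e2 : s + (m' + 1) = (s + m') + 1 := by ring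
      have e3 : r + k + (m' + 1) = (r + k + m') + 1 := by ring
      rw [e1, e2, e3, incFib_rec (r + k + m') (s + m') (by omega)]
    have aux : ∑ j ∈ Finset.range (k + 1 + 1), Nat.choose k j * f (m' + 1 - j)
        = (∑ j ∈ Finset.range (k + 1), Nat.choose k (j + 1) * f (m' - j)) + f (m' + 1) := by
      rw [Finset.sum_range_succ' (fun j => Nat.choose k j * f (m' + 1 - j)) (k + 1)]
      simp only [Nat.choose_zero_right, one_mul, Nat.sub_zero]
      congr 1
      refine Finset.sum_congr rfl fun j _ => ?_
      congr 2
      omega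
    have aux2 : ∑ j ∈ Finset.range (k + 1 + 1), Nat.choose k j * f (m' + 1 - j)
        = ∑ j ∈ Finset.range (k + 1), Nat.choose k j * f (m' + 1 - j) := by
      rw [Finset.sum_range_succ, Nat.choose_eq_zero_of_lt (by omega), zero_mul, add_zero]
    have main : ∑ j ∈ Finset.range (k + 1), Nat.choose k j * f (m' + 1 - j)
        = (∑ j ∈ Finset.range (k + 1), Nat.choose k (j + 1) * f (m' - j)) + f (m' + 1) := by
      rw [← aux2]; exact aux
    calc incFib (r + (k + 1) + (m' + 1)) (s + (m' + 1))
        = incFib (r + k + (m' + 1)) (s + (m' + 1)) + incFib (r + k + m') (s + m') := hrec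
      _ = (∑ j ∈ Finset.range (k + 1), Nat.choose k j * f (m' + 1 - j)) +
            ∑ j ∈ Finset.range (k + 1), Nat.choose k j * f (m' - j) := by
          rw [ih (m' + 1) (by omega), ih m' (by omega)]
      _ = ∑ j ∈ Finset.range (k + 1 + 1), Nat.choose (k + 1) j * f (m' + 1 - j) := by
          rw [Finset.sum_range_succ' (fun j => Nat.choose (k + 1) j * f (m' + 1 - j)) (k + 1)]
          simp only [Nat.choose_succ_succ, add_mul, Nat.choose_zero_right, one_mul, Nat.sub_zero]
          rw [Finset.sum_add_distrib]
          have e4 : ∀ j ∈ Finset.range (k + 1),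
              Nat.choose k (j + 1) * f (m' + 1 - (j + 1)) = Nat.choose k (j + 1) * f (m' - j) := by
            intro j _; congr 2 <;> omega
          have e5 : ∀ j ∈ Finset.range (k + 1),
              Nat.choose k j * f (m' + 1 - (j + 1)) = Nat.choose k j * f (m' - j) := by
            intro j _; congr 2 <;> omega
          rw [Finset.sum_congr rfl e4, Finset.sum_congr rfl e5, main]
          ring

/-- The orthogonality relation for binomial coefficients. -/
lemma choose_orthogonality (n i : ℕ) (hin : i ≤ n) :
    ∑ k ∈ Finset.range (n + 1), (Nat.choose n k : ℤ) * (-1) ^ (n - k) * (Nat.choose k i : ℤ)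
      = if i = n then 1 else 0 := by
  have h0 : ∑ k ∈ Finset.range (n + 1),
      (Nat.choose n k : ℤ) * (-1) ^ (n - k) * (Nat.choose k i : ℤ)
      = ∑ k ∈ Finset.Ico i (n + 1),
        (Nat.choose n k : ℤ) * (-1) ^ (n - k) * (Nat.choose k i : ℤ) := by
    refine (Finset.sum_subset ?_ ?_).symm
    · intro x hx
      simp only [Finset.mem_Ico] at hx
      simp only [Finset.mem_range]
      omega
    · intro x hx hx'
      simp only [Finset.mem_range] at hx
      simp only [Finset.mem_Ico, not_and, not_lt] at hx'
      have : x < i := by omega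
      rw [Nat.choose_eq_zero_of_lt this, Nat.cast_zero, mul_zero]
  rw [h0, Finset.sum_Ico_eq_sum_range]
  have hni : n + 1 - i = (n - i) + 1 := by omega
  rw [hni]
  have key : ∀ j ∈ Finset.range ((n - i) + 1),
      (Nat.choose n (i + j) : ℤ) * (-1) ^ (n - (i + j)) * (Nat.choose (i + j) i : ℤ)
      = (Nat.choose n i : ℤ) * (-1) ^ (n - i) * ((-1) ^ j * (Nat.choose (n - i) j : ℤ)) := by
    intro j hj
    have hj' : j ≤ n - i := Nat.lt_succ_iff.mp (Finset.mem_range.mp hj)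
    have hc := Nat.choose_mul (n := n) (show i ≤ i + j by omega)
    have hc' : ((Nat.choose n (i + j) * Nat.choose (i + j) i : ℕ) : ℤ)
        = ((Nat.choose n i * Nat.choose (n - i) (i + j - i) : ℕ) : ℤ) := by rw [hc]
    have e : i + j - i = j := by omega
    rw [e] at hc'
    push_cast at hc'
    have hsign : ((-1 : ℤ)) ^ (n - (i + j)) = (-1) ^ (n - i) * (-1) ^ j := by
      have h1 : (n - (i + j)) + j = n - i := by omega
      have hsq : ((-1 : ℤ)) ^ j * (-1) ^ j = 1 := by
        rw [← pow_add, ← two_mul, pow_mul]; norm_num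
      calc ((-1 : ℤ)) ^ (n - (i + j)) = (-1) ^ (n - (i + j)) * ((-1) ^ j * (-1) ^ j) := by
            rw [hsq, mul_one]
        _ = ((-1) ^ (n - (i + j)) * (-1) ^ j) * (-1) ^ j := by ring
        _ = (-1) ^ (n - i) * (-1) ^ j := by rw [← pow_add, h1]
    calc (Nat.choose n (i + j) : ℤ) * (-1) ^ (n - (i + j)) * (Nat.choose (i + j) i : ℤ)
        = ((Nat.choose n (i + j) : ℤ) * (Nat.choose (i + j) i : ℤ)) * (-1) ^ (n - (i + j)) := by
          ring
      _ = ((Nat.choose n i : ℤ) * (Nat.choose (n - i) j : ℤ)) * ((-1) ^ (n - i) * (-1) ^ j) := by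
          rw [hc', hsign]
      _ = _ := by ring
  rw [Finset.sum_congr rfl key, ← Finset.mul_sum]
  rw [Int.alternating_sum_range_choose]
  rcases eq_or_ne i n with rfl | hne
  · simp
  · have : n - i ≠ 0 := by omega
    simp [this, hne]

/-- Binomial inversion for integer sequences. -/
lemma binomial_inversion (f g : ℕ → ℤ) (n : ℕ)
    (hg : ∀ k, k ≤ n → g k = ∑ i ∈ Finset.range (k + 1), (Nat.choose k i : ℤ) * f i) :
    f n = ∑ k ∈ Finset.range (n + 1), (Nat.choose n k : ℤ) * (-1) ^ (n - k) * g k := by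
  symm
  have hg' : ∀ k ∈ Finset.range (n + 1),
      g k = ∑ i ∈ Finset.range (n + 1), (Nat.choose k i : ℤ) * f i := by
    intro k hk
    have hkn : k ≤ n := Nat.lt_succ_iff.mp (Finset.mem_range.mp hk)
    rw [hg k hkn]
    apply Finset.sum_subset
    · intro x hx; simp only [Finset.mem_range] at hx ⊢; omega
    · intro x _ hx
      simp only [Finset.mem_range, not_lt] at hx
      rw [Nat.choose_eq_zero_of_lt (by omega), Nat.cast_zero, zero_mul]
  calc ∑ k ∈ Finset.range (n + 1), (Nat.choose n k : ℤ) * (-1) ^ (n - k) * g k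
      = ∑ k ∈ Finset.range (n + 1), ∑ i ∈ Finset.range (n + 1),
          (Nat.choose n k : ℤ) * (-1) ^ (n - k) * ((Nat.choose k i : ℤ) * f i) := by
        refine Finset.sum_congr rfl fun k hk => ?_
        rw [hg' k hk, Finset.mul_sum]
    _ = ∑ i ∈ Finset.range (n + 1), (∑ k ∈ Finset.range (n + 1),
          (Nat.choose n k : ℤ) * (-1) ^ (n - k) * (Nat.choose k i : ℤ)) * f i := by
        rw [Finset.sum_comm]
        refine Finset.sum_congr rfl fun i _ => ?_
        rw [Finset.sum_mul]
        refine Finset.sum_congr rfl fun k _ => ?_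
        ring
    _ = ∑ i ∈ Finset.range (n + 1), (if i = n then (1 : ℤ) else 0) * f i := by
        refine Finset.sum_congr rfl fun i hi => ?_
        rw [choose_orthogonality n i (Nat.lt_succ_iff.mp (Finset.mem_range.mp hi))]
    _ = f n := by
        simp only [ite_mul, one_mul, zero_mul]
        rw [Finset.sum_ite_eq' (Finset.range (n + 1)) n f]
        simp

theorem incFib_inversion (n r s : ℕ) (h : 2 * s + n + 1 ≤ r) :
    (incFib (r + n) (s + n) : ℤ) =
      ∑ k ∈ Finset.range (n + 1),
        (Nat.choose n k : ℤ) * (-1) ^ (n - k) * incFib (r + 2 * k) (s + k) := by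
  have hr : 1 ≤ r := by omega
  have hnat : ∀ k : ℕ, incFib (r + 2 * k) (s + k) =
      ∑ i ∈ Finset.range (k + 1), Nat.choose k i * incFib (r + i) (s + i) := by
    intro k
    have hfwd := incFib_forward r s hr k k le_rfl
    have e : r + k + k = r + 2 * k := by ring
    rw [e] at hfwd
    rw [hfwd]
    rw [← Finset.sum_range_reflect (fun j => Nat.choose k j * incFib (r + j) (s + j)) (k + 1)]
    refine Finset.sum_congr rfl fun j hj => ?_
    have hjk : j ≤ k := Nat.lt_succ_iff.mp (Finset.mem_range.mp hj)
    have e1 : k + 1 - 1 - j = k - j := by omega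
    rw [e1, Nat.choose_symm hjk]
  apply binomial_inversion (fun i => (incFib (r + i) (s + i) : ℤ))
    (fun k => (incFib (r + 2 * k) (s + k) : ℤ)) n
  intro k _
  show (incFib (r + 2 * k) (s + k) : ℤ) = _
  rw [hnat k]
  rw [Nat.cast_sum]
  refine Finset.sum_congr rfl fun i _ => ?_
  rw [Nat.cast_mul]
end

section
/- For 0 ≤ s ≤ (r-n)/2, the incomplete Lucas numbers satisfy L_{r+2n}(s+n) = Σ_{k=0}^{n} C(n,k) L_{r+k}(s+k). -/
def incLucas (n k : ℕ) : ℚ :=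
  ∑ j ∈ Finset.range (k + 1), (n : ℚ) / (n - j) * Nat.choose (n - j) j

lemma term_rec (m j : ℕ) (hm : 1 ≤ m) (hj : 2 * j ≤ m) :
    ((m:ℚ) + 2) / ((m:ℚ) + 2 - (j + 1)) * Nat.choose (m + 2 - (j + 1)) (j + 1)
      = ((m:ℚ) + 1) / ((m:ℚ) + 1 - (j + 1)) * Nat.choose (m + 1 - (j + 1)) (j + 1)
        + (m:ℚ) / ((m:ℚ) - j) * Nat.choose (m - j) j := by
  have hjm : j < m := by omega
  have e1 : m + 2 - (j + 1) = (m - j) + 1 := by omega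
  have e2 : m + 1 - (j + 1) = m - j := by omega
  rw [e1, e2, Nat.choose_succ_succ]
  have key : (Nat.choose (m - j) (j + 1) : ℚ) * (j + 1)
      = (Nat.choose (m - j) j : ℚ) * ((m : ℚ) - 2 * j) := by
    have := Nat.choose_succ_right_eq (m - j) j
    have h2 : m - j - j = m - 2 * j := by omega
    rw [h2] at this
    have := congrArg (fun x : ℕ => (x : ℚ)) this
    push_cast at this
    rw [this]
    congr 1
    push_cast [Nat.cast_sub (by omega : 2 * j ≤ m)]
    ring
  have d1 : ((m:ℚ) + 2 - (j + 1)) ≠ 0 := by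
    have : (j:ℚ) < m := by exact_mod_cast hjm
    intro hc; nlinarith
  have d2 : ((m:ℚ) - j) ≠ 0 := by
    have : (j:ℚ) < m := by exact_mod_cast hjm
    intro hc; nlinarith
  have d3 : ((m:ℚ) + 1 - (j + 1)) ≠ 0 := by
    have : (j:ℚ) - m = 0 → False := by
      have : (j:ℚ) < m := by exact_mod_cast hjm
      intro hc; nlinarith
    intro hc; apply this; linarith
  push_cast
  field_simp
  nlinarith [key]

lemma incLucas_rec (m k : ℕ) (hm : 1 ≤ m) (hk : 2 * k ≤ m) :
    incLucas (m + 2) (k + 1) = incLucas (m + 1) (k + 1) + incLucas m k := by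
  unfold incLucas
  rw [Finset.sum_range_succ' _ (k + 1), Finset.sum_range_succ' _ (k + 1)]
  have h0 : ((m:ℚ)+2) / ((m:ℚ)+2 - (0:ℕ)) * Nat.choose (m + 2 - 0) 0 = 1 := by
    push_cast; rw [Nat.choose_zero_right]; push_cast
    rw [sub_zero, div_self (by positivity)]; ring
  have h1 : ((m:ℚ)+1) / ((m:ℚ)+1 - (0:ℚ)) * ((Nat.choose (m + 1) 0 : ℕ) : ℚ) = 1 := by
    rw [Nat.choose_zero_right]; push_cast
    rw [sub_zero, div_self (by positivity)]; ring
  push_cast at h0 h1 ⊢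
  have main : ∑ x ∈ Finset.range (k+1), ((m:ℚ)+2)/((m:ℚ)+2-((x:ℚ)+1)) * ((Nat.choose (m+1-x) (x+1) : ℕ) : ℚ)
      = ∑ x ∈ Finset.range (k+1), (((m:ℚ)+1)/((m:ℚ)+1-((x:ℚ)+1)) * ((Nat.choose (m-x) (x+1) : ℕ):ℚ)
          + (m:ℚ)/((m:ℚ)-(x:ℚ)) * ((Nat.choose (m-x) x : ℕ) : ℚ)) := by
    apply Finset.sum_congr rfl
    intro i hi
    have hi' : i ≤ k := by simpa [Nat.lt_succ_iff] using hi
    have := term_rec m i hm (by omega)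
    push_cast at this
    convert this using 3
  rw [main, Finset.sum_add_distrib, h0, h1]
  ring

lemma binom_step (n : ℕ) (a : ℕ → ℚ) :
    ∑ k ∈ Finset.range (n + 2), (Nat.choose (n + 1) k : ℚ) * a k
      = ∑ k ∈ Finset.range (n + 1), (Nat.choose n k : ℚ) * a k
        + ∑ k ∈ Finset.range (n + 1), (Nat.choose n k : ℚ) * a (k + 1) := by
  rw [Finset.sum_range_succ' _ (n + 1)]
  have : ∀ k, (Nat.choose (n + 1) (k + 1) : ℚ) = Nat.choose n k + Nat.choose n (k + 1) := by
    intro k; exact_mod_cast congrArg (Nat.cast (R := ℚ)) (Nat.choose_succ_succ n k)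
  simp only [this, add_mul]
  rw [Finset.sum_add_distrib]
  have : ∑ x ∈ Finset.range (n + 1), (Nat.choose n (x + 1) : ℚ) * a (x + 1)
      + (Nat.choose (n + 1) 0 : ℚ) * a 0
      = ∑ k ∈ Finset.range (n + 1), (Nat.choose n k : ℚ) * a k := by
    rw [Finset.sum_range_succ' (fun k => (Nat.choose n k : ℚ) * a k) n]
    rw [Finset.sum_range_succ (fun x => (Nat.choose n (x + 1) : ℚ) * a (x + 1)) n]
    simp [Nat.choose_succ_self]
  linarith [this]

theorem incLucas_binomial_sum (n r s : ℕ) (h : 2 * s + n ≤ r) :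
    incLucas (r + 2 * n) (s + n) =
      ∑ k ∈ Finset.range (n + 1), (Nat.choose n k : ℚ) * incLucas (r + k) (s + k) := by
  induction n generalizing r s with
  | zero => simp
  | succ n ih =>
    rw [show n + 1 + 1 = n + 2 from rfl, binom_step]
    have ih1 := ih r s (by omega)
    have ih2 : incLucas (r + 1 + 2 * n) (s + 1 + n)
        = ∑ k ∈ Finset.range (n + 1), (Nat.choose n k : ℚ) * incLucas (r + (k + 1)) (s + (k + 1)) := by
      rw [ih (r + 1) (s + 1) (by omega)]
      exact Finset.sum_congr rfl fun k _ => by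
        rw [show r + 1 + k = r + (k + 1) by omega, show s + 1 + k = s + (k + 1) by omega]
    rw [← ih1, ← ih2]
    have hrec := incLucas_rec (r + 2 * n) (s + n) (by omega) (by omega)
    have e1 : r + 2 * (n + 1) = r + 2 * n + 2 := by ring
    have e2 : s + (n + 1) = s + n + 1 := by ring
    have e3 : r + 1 + 2 * n = r + 2 * n + 1 := by ring
    have e4 : s + 1 + n = s + n + 1 := by ring
    rw [e1, e2, e3, e4, hrec]
    ring
end

section
/- For 0 ≤ s ≤ (r-n)/2, the incomplete Lucas numbers satisfy the inversion formula L_{r+n}(s+n) = Σ_{k=0}^{n} C(n,k) (-1)^{n-k} L_{r+2k}(s+k). -/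
lemma qterm (a i : ℕ) (h : i + 1 ≤ a) :
    ((a:ℚ)+i+2)/((a:ℚ)+1) * ((a+1).choose (i+1) : ℚ)
      = ((a:ℚ)+i+1)/(a:ℚ) * (a.choose (i+1) : ℚ) + ((a:ℚ)+i)/(a:ℚ) * (a.choose i : ℚ) := by
  have ha : (a:ℚ) ≠ 0 := Nat.cast_ne_zero.mpr (by omega)
  have ha1 : (a:ℚ) + 1 ≠ 0 := by positivity
  have hp : ((a+1).choose (i+1) : ℚ) = (a.choose i : ℚ) + (a.choose (i+1) : ℚ) := by
    rw [Nat.choose_succ_succ]; push_cast; ring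
  have hr : (a.choose (i+1) : ℚ) * ((i:ℚ)+1) = (a.choose i : ℚ) * ((a:ℚ) - i) := by
    have h2 := Nat.choose_succ_right_eq a i
    have h3 : ((a - i : ℕ) : ℚ) = (a:ℚ) - i := by
      rw [Nat.cast_sub (by omega : i ≤ a)]
    calc (a.choose (i+1) : ℚ) * ((i:ℚ)+1) = ((a.choose (i+1) * (i+1) : ℕ) : ℚ) := by push_cast; ring
      _ = ((a.choose i * (a - i) : ℕ) : ℚ) := by rw [h2]
      _ = (a.choose i : ℚ) * ((a:ℚ) - i) := by push_cast [h3]; ring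
  field_simp
  linear_combination ((a:ℚ)*((a:ℚ)+(i:ℚ)+2))*hp - hr

lemma incLucas_rec_s13 (m j : ℕ) (h : 2*j + 1 ≤ m) :
    incLucas (m+2) (j+1) = incLucas (m+1) (j+1) + incLucas m j := by
  unfold incLucas
  have split : ∀ (F : ℕ → ℚ), ∑ i ∈ Finset.range (j+1+1), F i
      = ∑ i ∈ Finset.range (j+1), F (i+1) + F 0 := fun F => Finset.sum_range_succ' F (j+1)
  rw [split, split]
  have term : ∀ i ∈ Finset.range (j+1),
      ((m+2:ℕ):ℚ)/(((m+2:ℕ):ℚ) - ((i+1:ℕ):ℚ)) * ((m+2-(i+1)).choose (i+1) : ℚ)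
        = ((m+1:ℕ):ℚ)/(((m+1:ℕ):ℚ) - ((i+1:ℕ):ℚ)) * ((m+1-(i+1)).choose (i+1) : ℚ)
          + ((m:ℕ):ℚ)/(((m:ℕ):ℚ) - ((i:ℕ):ℚ)) * ((m-i).choose i : ℚ) := by
    intro i hi
    have hi' : i ≤ j := by simpa [Nat.lt_succ_iff] using hi
    set a := m - i with ha
    have h1 : i + 1 ≤ a := by omega
    have e2 : m + 2 - (i+1) = a + 1 := by omega
    have e3 : m + 1 - (i+1) = a := by omega
    have hm : (m:ℚ) = (a:ℚ) + i := by
      have : m = a + i := by omega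
      exact_mod_cast this
    rw [e2, e3]
    push_cast
    rw [hm]
    linear_combination qterm a i h1
  rw [Finset.sum_congr rfl term, Finset.sum_add_distrib]
  push_cast
  have t1 : ((m:ℚ)+2)/((m:ℚ)+2) = 1 := div_self (by positivity)
  have t2 : ((m:ℚ)+1)/((m:ℚ)+1) = 1 := div_self (by positivity)
  norm_num [t1, t2]
  ring

lemma alt (n : ℕ) (A : ℕ → ℚ) :
    ∑ k ∈ Finset.range (n+1+1), ((n+1).choose k : ℚ) * (-1)^k * A k
      = ∑ k ∈ Finset.range (n+1), (n.choose k : ℚ) * (-1)^k * (A k - A (k+1)) := by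
  rw [Finset.sum_range_succ' (fun k => ((n+1).choose k : ℚ) * (-1)^k * A k) (n+1)]
  have e1 : ∑ k ∈ Finset.range (n+1), (n.choose k : ℚ) * (-1)^k * (A k - A (k+1))
      = (∑ k ∈ Finset.range (n+1), (n.choose k : ℚ) * (-1)^k * A k)
        - ∑ k ∈ Finset.range (n+1), (n.choose k : ℚ) * (-1)^k * A (k+1) := by
    rw [← Finset.sum_sub_distrib]; exact Finset.sum_congr rfl (fun k _ => by ring)
  have e2 : ∑ k ∈ Finset.range (n+1), (n.choose k : ℚ) * (-1)^k * A k
      = ∑ i ∈ Finset.range n, (n.choose (i+1) : ℚ) * (-1)^(i+1) * A (i+1) + A 0 := by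
    rw [Finset.sum_range_succ' (fun k => (n.choose k : ℚ) * (-1)^k * A k) n]; simp
  have e3 : ∑ i ∈ Finset.range (n+1), (n.choose (i+1) : ℚ) * (-1)^(i+1) * A (i+1)
      = ∑ i ∈ Finset.range n, (n.choose (i+1) : ℚ) * (-1)^(i+1) * A (i+1) := by
    rw [Finset.sum_range_succ]; simp
  have e4 : ∀ i ∈ Finset.range (n+1),
      ((n+1).choose (i+1) : ℚ) * (-1)^(i+1) * A (i+1)
        = (n.choose (i+1) : ℚ) * (-1)^(i+1) * A (i+1)
          - ((n.choose i : ℚ) * (-1)^i * A i - (n.choose i : ℚ) * (-1)^i * (A i - A (i+1))) := by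
    intro i _; rw [Nat.choose_succ_succ]; push_cast; ring
  rw [Finset.sum_congr rfl e4, Finset.sum_sub_distrib, e3, Finset.sum_sub_distrib, e1, e2]
  simp
  ring

lemma hsign (m k : ℕ) (hk : k ≤ m) : ((-1:ℚ))^(m-k) = (-1)^m * (-1)^k := by
  have h1 : (-1:ℚ)^m = (-1)^(m-k) * (-1)^k := by rw [← pow_add]; congr 1; omega
  have h2 : (-1:ℚ)^k * (-1)^k = 1 := by rw [← pow_add, ← two_mul, pow_mul]; norm_num
  rw [h1, mul_assoc, h2, mul_one]

theorem incLucas_inversion (n r s : ℕ) (h : 2 * s + n ≤ r) :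
    incLucas (r + n) (s + n) =
      ∑ k ∈ Finset.range (n + 1),
        (Nat.choose n k : ℚ) * (-1) ^ (n - k) * incLucas (r + 2 * k) (s + k) := by
  induction n generalizing r s with
  | zero => simp
  | succ n ih =>
    have step : ∀ k, incLucas (r + 2*k) (s + k) - incLucas (r + 2*(k+1)) (s + (k+1))
        = -(incLucas ((r+1) + 2*k) ((s+1) + k)) := by
      intro k
      have hrec := incLucas_rec_s13 (r + 2*k) (s + k) (by omega)
      have e1 : r + 2*(k+1) = r + 2*k + 2 := by ring
      have e2 : s + (k+1) = s + k + 1 := by ring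
      have e3 : (r+1) + 2*k = r + 2*k + 1 := by ring
      have e4 : (s+1) + k = s + k + 1 := by ring
      rw [e1, e2, e3, e4, hrec]; ring
    calc incLucas (r + (n+1)) (s + (n+1))
        = incLucas ((r+1) + n) ((s+1) + n) := by congr 1 <;> omega
      _ = ∑ k ∈ Finset.range (n+1), (n.choose k : ℚ) * (-1)^(n-k)
            * incLucas ((r+1) + 2*k) ((s+1) + k) := ih (r+1) (s+1) (by omega)
      _ = (-1)^(n+1) * ∑ k ∈ Finset.range (n+1), (n.choose k : ℚ) * (-1)^k
            * (incLucas (r + 2*k) (s + k) - incLucas (r + 2*(k+1)) (s + (k+1))) := by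
          rw [Finset.mul_sum]
          refine Finset.sum_congr rfl (fun k hk => ?_)
          have hk' : k ≤ n := by simpa [Nat.lt_succ_iff] using hk
          rw [step k, hsign n k hk', pow_succ]
          ring
      _ = (-1)^(n+1) * ∑ k ∈ Finset.range (n+1+1), ((n+1).choose k : ℚ) * (-1)^k
            * incLucas (r + 2*k) (s + k) := by rw [alt n (fun k => incLucas (r + 2*k) (s + k))]
      _ = ∑ k ∈ Finset.range (n+1+1), ((n+1).choose k : ℚ) * (-1)^(n+1-k)
            * incLucas (r + 2*k) (s + k) := by
          rw [Finset.mul_sum]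
          refine Finset.sum_congr rfl (fun k hk => ?_)
          have hk' : k ≤ n+1 := by simpa [Nat.lt_succ_iff] using hk
          rw [hsign (n+1) k hk']
          ring
end

section
/- For all k ≥ 0, F_{2k+2} - k - 1 = Σ_{i=0}^{k-1} C(k+1-i, 2) F_{2i+1}. -/
lemma sumA (k : ℕ) :
    (∑ i ∈ Finset.range k, (Nat.fib (2 * i + 1) : ℤ)) = Nat.fib (2 * k) := by
  induction k with
  | zero => simp
  | succ n ih =>
      rw [Finset.sum_range_succ, ih]
      have : 2 * (n + 1) = 2 * n + 1 + 1 := by ring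
      rw [this, Nat.fib_add_two]
      push_cast; ring

lemma sumT (k : ℕ) :
    (∑ i ∈ Finset.range k, ((k : ℤ) - i) * Nat.fib (2 * i + 1)) =
      (Nat.fib (2 * k + 1) : ℤ) - 1 := by
  induction k with
  | zero => simp
  | succ n ih =>
      rw [Finset.sum_range_succ]
      have h1 : ∀ i ∈ Finset.range n,
          ((n + 1 : ℕ) : ℤ) - i = ((n : ℤ) - i) + 1 := by
        intro i _; push_cast; ring
      have h2 : (∑ i ∈ Finset.range n, (((n+1:ℕ) : ℤ) - i) * Nat.fib (2 * i + 1)) =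
          (∑ i ∈ Finset.range n, ((n : ℤ) - i) * Nat.fib (2 * i + 1)) +
          (∑ i ∈ Finset.range n, (Nat.fib (2 * i + 1) : ℤ)) := by
        rw [← Finset.sum_add_distrib]
        apply Finset.sum_congr rfl
        intro i hi; rw [h1 i hi]; ring
      push_cast at h2 ⊢
      rw [h2, ih, sumA]
      have h3 : 2 * (n + 1) + 1 = 2 * n + 1 + 1 + 1 := by ring
      rw [h3, Nat.fib_add_two, Nat.fib_add_two]
      push_cast; ring

theorem fib_even_weighted_sum (k : ℕ) :
    (Nat.fib (2 * k + 2) : ℤ) - k - 1 =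
      ∑ i ∈ Finset.range k, (Nat.choose (k + 1 - i) 2 : ℤ) * Nat.fib (2 * i + 1) := by
  induction k with
  | zero => simp
  | succ n ih =>
      rw [Finset.sum_range_succ]
      have hch : ∀ i ∈ Finset.range n,
          ((Nat.choose (n + 1 + 1 - i) 2 : ℤ)) =
            ((n : ℤ) + 1 - i) + (Nat.choose (n + 1 - i) 2 : ℤ) := by
        intro i hi
        have hi' : i < n := Finset.mem_range.mp hi
        have h1 : n + 1 + 1 - i = (n + 1 - i) + 1 := by omega
        rw [h1, Nat.choose_succ_succ, Nat.choose_one_right]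
        have h2 : ((n + 1 - i : ℕ) : ℤ) = (n : ℤ) + 1 - i := by
          have : i ≤ n + 1 := by omega
          push_cast [Nat.cast_sub this]; ring
        push_cast
        rw [h2]
      have hsplit : (∑ i ∈ Finset.range n, (Nat.choose (n + 1 + 1 - i) 2 : ℤ) * Nat.fib (2 * i + 1)) =
          (∑ i ∈ Finset.range n, ((n : ℤ) + 1 - i) * Nat.fib (2 * i + 1)) +
          (∑ i ∈ Finset.range n, (Nat.choose (n + 1 - i) 2 : ℤ) * Nat.fib (2 * i + 1)) := by
        rw [← Finset.sum_add_distrib]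
        apply Finset.sum_congr rfl
        intro i hi
        rw [hch i hi]; ring
      have hT : (∑ i ∈ Finset.range n, ((n : ℤ) + 1 - i) * Nat.fib (2 * i + 1)) =
          (∑ i ∈ Finset.range n, ((n : ℤ) - i) * Nat.fib (2 * i + 1)) +
          (∑ i ∈ Finset.range n, (Nat.fib (2 * i + 1) : ℤ)) := by
        rw [← Finset.sum_add_distrib]
        apply Finset.sum_congr rfl
        intro i _; ring
      have hlast : n + 1 + 1 - n = 2 := by omega
      push_cast at hsplit ⊢
      rw [hsplit, hT, sumT, sumA, hlast, ← ih]
      simp only [show 2 * (n + 1) + 2 = 2 * n + 2 + 2 from by ring, Nat.fib_add_two,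
        Nat.choose_self]
      push_cast; ring
end

section
/- For all k ≥ 0, L_{2k+1} = Σ_{i=0}^{k-1} (k - i) L_{2i+1} + 2k + 1. -/
lemma lucas_odd_sum (k : ℕ) :
    (∑ i ∈ Finset.range k, lucas (2 * i + 1)) + 2 = lucas (2 * k) := by
  induction k with
  | zero => simp [lucas]
  | succ k ih =>
    rw [Finset.sum_range_succ]
    have h2 : 2 * (k + 1) = 2 * k + 1 + 1 := by ring
    rw [h2, lucas]
    omega

theorem lucas_odd_weighted_sum (k : ℕ) :
    lucas (2 * k + 1) =
      (∑ i ∈ Finset.range k, (k - i) * lucas (2 * i + 1)) + 2 * k + 1 := by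
  induction k with
  | zero => simp [lucas]
  | succ k ih =>
    have hsum : (∑ i ∈ Finset.range (k + 1), (k + 1 - i) * lucas (2 * i + 1))
        = (∑ i ∈ Finset.range k, (k - i) * lucas (2 * i + 1))
          + (∑ i ∈ Finset.range k, lucas (2 * i + 1)) + lucas (2 * k + 1) := by
      rw [Finset.sum_range_succ]
      have : (∑ i ∈ Finset.range k, (k + 1 - i) * lucas (2 * i + 1))
          = ∑ i ∈ Finset.range k, ((k - i) * lucas (2 * i + 1) + lucas (2 * i + 1)) := by
        apply Finset.sum_congr rfl
        intro i hi
        have : i < k := Finset.mem_range.mp hi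
        have : k + 1 - i = (k - i) + 1 := by omega
        rw [this]
        ring
      rw [this, Finset.sum_add_distrib]
      simp
    have h1 := lucas_odd_sum k
    have h3 : 2 * (k + 1) + 1 = 2 * k + 1 + 1 + 1 := by ring
    have h4 : lucas (2 * k + 1 + 1 + 1) = lucas (2 * k + 1 + 1) + lucas (2 * k + 1) := by
      rw [lucas]
    have h5 : lucas (2 * k + 1 + 1) = lucas (2 * k + 1) + lucas (2 * k) := by
      rw [lucas]
    have h6 : 2 * k + 1 + 1 = 2 * (k + 1) := by ring
    rw [h3, h4, h5, hsum]
    omega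
end
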